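/- Suppose λ, μ, ν are partitions of n with μ dominating ν. Then the Kostka numbers satisfy K_{λμ} ≤ K_{λν}: the number of semistandard λ-tableaux of content μ is at most the number of semistandard λ-tableaux of content ν. -/
import Mathlib


/-- A composition of `n`: a finitely-supported sequence of naturals summing to `n`. -/
def IsComposition (n : ℕ) (μ : ℕ → ℕ) : Prop :=
  (Function.support μ).Finite ∧ ∑ᶠ i, μ i = n

/-- A partition of `n`: a weakly decreasing composition of `n`. -/
def IsPartition (n : ℕ) (μ : ℕ → ℕ) : Prop :=
  Antitone μ ∧ IsComposition n μ

/-- `μ` dominates `ν`: every partial sum of `μ` is at least that of `ν`. -/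
def Dominates (μ ν : ℕ → ℕ) : Prop :=
  ∀ r, ∑ i ∈ Finset.range r, ν i ≤ ∑ i ∈ Finset.range r, μ i

/-- `T` is a semistandard tableau of shape `p` (0-indexed rows/columns/entries):
rows weakly increase, columns strictly increase, and `T` is zero outside the diagram. -/
def IsSSYT (p : ℕ → ℕ) (T : ℕ → ℕ → ℕ) : Prop :=
  (∀ r c₁ c₂, c₁ ≤ c₂ → c₂ < p r → T r c₁ ≤ T r c₂) ∧
  (∀ r₁ r₂ c, r₁ < r₂ → c < p r₂ → T r₁ c < T r₂ c) ∧
  (∀ r c, p r ≤ c → T r c = 0)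

/-- The number of entries of `T` equal to `i` within the diagram of `p`. -/
noncomputable def contentOf (p : ℕ → ℕ) (T : ℕ → ℕ → ℕ) (i : ℕ) : ℕ :=
  {q : ℕ × ℕ | q.2 < p q.1 ∧ T q.1 q.2 = i}.ncard

/-- The Kostka number: the number of semistandard tableaux of shape `p` and content `μ`. -/
noncomputable def Kostka (p μ : ℕ → ℕ) : ℕ :=
  {T : ℕ → ℕ → ℕ | IsSSYT p T ∧ ∀ i, contentOf p T i = μ i}.ncard

namespace KostkaProof


def cR (B k : ℕ) : ℕ := B - 1 - k / B
def cC (B k : ℕ) : ℕ := k % B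
def enc (B r c : ℕ) : ℕ := (B - 1 - r) * B + c

lemma enc_lt {B r c : ℕ} (hr : r < B) (hc : c < B) : enc B r c < B * B := by
  have h1 : B - 1 - r ≤ B - 1 := Nat.sub_le _ _
  have := Nat.mul_le_mul_right B h1
  unfold enc
  have hB : 1 ≤ B := Nat.one_le_of_lt (Nat.lt_of_le_of_lt (Nat.zero_le _) hr)
  nlinarith [Nat.sub_add_cancel hB]

lemma div_enc {B r c : ℕ} (hc : c < B) : enc B r c / B = B - 1 - r := by
  unfold enc
  rw [mul_comm, Nat.mul_add_div (by omega), Nat.div_eq_of_lt hc, Nat.add_zero]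

lemma cR_enc {B r c : ℕ} (hr : r < B) (hc : c < B) : cR B (enc B r c) = r := by
  unfold cR; rw [div_enc hc]; omega

lemma cC_enc {B r c : ℕ} (hc : c < B) : cC B (enc B r c) = c := by
  unfold cC enc
  rw [mul_comm, Nat.mul_add_mod, Nat.mod_eq_of_lt hc]

lemma enc_cRC {B k : ℕ} (hk : k < B * B) : enc B (cR B k) (cC B k) = k := by
  unfold enc cR cC
  have hB : 0 < B := by by_contra h; simp [Nat.eq_zero_of_not_pos h] at hk
  have hdiv : k / B < B := Nat.div_lt_of_lt_mul hk
  have e : B * (k / B) + k % B = k := Nat.div_add_mod k B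
  have h1 : B - 1 - (B - 1 - k / B) = k / B := by
    generalize k / B = q at hdiv ⊢; omega
  rw [h1, mul_comm]
  exact e

lemma cR_lt {B k : ℕ} (hB : 0 < B) : cR B k < B :=
  lt_of_le_of_lt (Nat.sub_le _ _) (by omega)
lemma cC_lt {B k : ℕ} (hB : 0 < B) : cC B k < B := Nat.mod_lt _ hB

lemma enc_inj {B k k' : ℕ} (hk : k < B * B) (hk' : k' < B * B)
    (h1 : cR B k = cR B k') (h2 : cC B k = cC B k') : k = k' := by
  rw [← enc_cRC hk, ← enc_cRC hk', h1, h2]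




noncomputable section
open Finset

variable (B v : ℕ) (p : ℕ → ℕ) (T : ℕ → ℕ → ℕ)

/-- the letter weight at key `k` : +1 for `v`, −1 for `v+1`, 0 otherwise -/
def wt (k : ℕ) : ℤ :=
  if k < B * B ∧ cC B k < p (cR B k) then
    (if T (cR B k) (cC B k) = v then 1
     else if T (cR B k) (cC B k) = v + 1 then -1 else 0)
  else 0

/-- prefix sums of the weights -/
def Dd (m : ℕ) : ℤ := ∑ k ∈ Finset.range m, wt B v p T k

/-- keys of diagram cells with entry `i` -/
def keyset (i : ℕ) : Finset ℕ :=
  (Finset.range (B * B)).filter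
    (fun k => cC B k < p (cR B k) ∧ T (cR B k) (cC B k) = i)

lemma wt_bounds (k : ℕ) : wt B v p T k = 1 ∨ wt B v p T k = -1 ∨ wt B v p T k = 0 := by
  unfold wt; split_ifs <;> simp

lemma Dd_succ (m : ℕ) : Dd B v p T (m + 1) = Dd B v p T m + wt B v p T m :=
  Finset.sum_range_succ _ _

lemma wt_eq_indicator (k : ℕ) (hk : k ∈ Finset.range (B * B)) :
    wt B v p T k = (if k ∈ keyset B p T v then (1:ℤ) else 0)
      - (if k ∈ keyset B p T (v+1) then (1:ℤ) else 0) := by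
  simp only [keyset, Finset.mem_filter, Finset.mem_range] at *
  unfold wt
  split_ifs with h h1 h2 <;> simp_all <;> omega

lemma Dd_total :
    Dd B v p T (B * B)
      = ((keyset B p T v).card : ℤ) - ((keyset B p T (v+1)).card : ℤ) := by
  unfold Dd
  rw [Finset.sum_congr rfl (wt_eq_indicator B v p T), Finset.sum_sub_distrib]
  have h1 : ∀ (i : ℕ), (∑ k ∈ Finset.range (B*B), if k ∈ keyset B p T i then (1:ℤ) else 0)
      = ((keyset B p T i).card : ℤ) := by
    intro i
    rw [Finset.sum_ite_mem]
    have : Finset.range (B*B) ∩ keyset B p T i = keyset B p T i :=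
      Finset.inter_eq_right.2 (Finset.filter_subset _ _)
    rw [this, Finset.sum_const, nsmul_eq_mul, mul_one]
  rw [h1, h1]

/-- Bridge: `contentOf` equals the card of the key set. -/
lemma contentOf_eq (hB1 : ∀ r, p r ≤ B) (hB2 : ∀ r, B ≤ r → p r = 0) (i : ℕ) :
    contentOf p T i = (keyset B p T i).card := by
  have hset : {q : ℕ × ℕ | q.2 < p q.1 ∧ T q.1 q.2 = i}
      = (fun k => (cR B k, cC B k)) '' ↑(keyset B p T i) := by
    ext ⟨r, c⟩
    simp only [Set.mem_setOf_eq, Set.mem_image, Finset.mem_coe, keyset,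
      Finset.mem_filter, Finset.mem_range]
    constructor
    · rintro ⟨hc, hT⟩
      have hr : r < B := by
        by_contra hr; exact absurd (hB2 r (le_of_not_gt hr) ▸ hc) (by omega)
      have hcB : c < B := lt_of_lt_of_le hc (hB1 r)
      refine ⟨enc B r c, ⟨enc_lt hr hcB, ?_, ?_⟩, ?_⟩ <;>
        rw [cR_enc hr hcB, cC_enc hcB]
      · exact hc
      · exact hT
    · rintro ⟨k, ⟨hk, hc, hT⟩, hq⟩
      obtain ⟨h1, h2⟩ := Prod.mk.injEq .. ▸ hq
      subst h1; subst h2; exact ⟨hc, hT⟩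
  rw [contentOf, hset, Set.ncard_image_of_injOn, Set.ncard_coe_finset]
  intro k hk k' hk' he
  simp only [Finset.mem_coe, keyset, Finset.mem_filter, Finset.mem_range] at hk hk'
  exact enc_inj hk.1 hk'.1 (congrArg Prod.fst he) (congrArg Prod.snd he)

end


lemma diag_finite (p : ℕ → ℕ) (B : ℕ) (hB1 : ∀ r, p r ≤ B) (hB2 : ∀ r, B ≤ r → p r = 0) :
    {q : ℕ × ℕ | q.2 < p q.1}.Finite := by
  apply Set.Finite.subset (Set.finite_Icc (0,0) (B,B))
  rintro ⟨r, c⟩ h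
  simp only [Set.mem_setOf_eq] at h
  have hr : r < B := by
    by_contra hr; exact absurd (hB2 r (le_of_not_gt hr) ▸ h) (by omega)
  have hc : c < B := lt_of_lt_of_le h (hB1 r)
  simp [Prod.le_def]; omega

lemma target_finite (p : ℕ → ℕ) (B : ℕ) (hB1 : ∀ r, p r ≤ B) (hB2 : ∀ r, B ≤ r → p r = 0)
    (β : ℕ → ℕ) (V : ℕ) (hV : ∀ i, V ≤ i → β i = 0) :
    {T : ℕ → ℕ → ℕ | IsSSYT p T ∧ ∀ i, contentOf p T i = β i}.Finite := by
  set S := {T : ℕ → ℕ → ℕ | IsSSYT p T ∧ ∀ i, contentOf p T i = β i} with hS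
  have hval : ∀ T ∈ S, ∀ r c, T r c < V + 1 := by
    rintro T ⟨hssyt, hcont⟩ r c
    by_cases hc : c < p r
    · have hne : (r, c) ∈ {q : ℕ × ℕ | q.2 < p q.1 ∧ T q.1 q.2 = (T r c)} := ⟨hc, rfl⟩
      have hfin : {q : ℕ × ℕ | q.2 < p q.1 ∧ T q.1 q.2 = (T r c)}.Finite :=
        (diag_finite p B hB1 hB2).subset (fun q hq => hq.1)
      have hpos : 0 < contentOf p T (T r c) := by
        rw [contentOf]
        exact (Set.ncard_pos hfin).2 ⟨_, hne⟩
      rw [hcont] at hpos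
      have : T r c < V := by by_contra h; rw [hV _ (le_of_not_gt h)] at hpos; omega
      omega
    · rw [hssyt.2.2 r c (le_of_not_gt hc)]; omega
  rw [← Set.finite_coe_iff]
  have hinj : Function.Injective
      (fun (T : S) => (fun r c : Fin B => (⟨(T : ℕ → ℕ → ℕ) r c,
        hval T T.2 r c⟩ : Fin (V + 1)))) := by
    rintro ⟨T₁, h₁⟩ ⟨T₂, h₂⟩ he
    simp only [Subtype.mk.injEq]
    ext r c
    show T₁ r c = T₂ r c
    by_cases hr : r < B
    · by_cases hc : c < B
      · have := congrFun (congrFun he ⟨r, hr⟩) ⟨c, hc⟩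
        simpa using this
      · rw [h₁.1.2.2 r c (le_trans (hB1 r) (le_of_not_gt hc)),
          h₂.1.2.2 r c (le_trans (hB1 r) (le_of_not_gt hc))]
    · rw [h₁.1.2.2 r c (by rw [hB2 r (le_of_not_gt hr)]; omega),
        h₂.1.2.2 r c (by rw [hB2 r (le_of_not_gt hr)]; omega)]
  exact Finite.of_injective _ hinj



section Part4
open Finset

variable (B v : ℕ) (p : ℕ → ℕ) (T : ℕ → ℕ → ℕ)

noncomputable def Mv : ℤ :=
  ((Finset.range (B*B+1)).image (Dd B v p T)).max'
    ((Finset.nonempty_range_iff.mpr (Nat.succ_ne_zero _)).image _)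

noncomputable def mstar : ℕ := sInf {m | Dd B v p T m = Mv B v p T ∧ m ≤ B*B}

noncomputable def kstar : ℕ := mstar B v p T - 1

noncomputable def fop : ℕ → ℕ → ℕ :=
  fun r c => if r = cR B (kstar B v p T) ∧ c = cC B (kstar B v p T) then v + 1
    else T r c

def elig (k : ℕ) : Prop :=
  k < B*B ∧ wt B v p T k = -1 ∧
    ∀ m, k < m → m ≤ B*B → Dd B v p T m ≤ Dd B v p T (k+1)

open Classical in
noncomputable def eop : ℕ → ℕ → ℕ :=
  if _h : ∃ k, elig B v p T k then
    fun r c => if r = cR B (sInf {k | elig B v p T k}) ∧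
        c = cC B (sInf {k | elig B v p T k}) then v else T r c
  else T

variable {B v p T}

lemma Dd_le_Mv {m : ℕ} (hm : m ≤ B*B) : Dd B v p T m ≤ Mv B v p T :=
  Finset.le_max' _ _ (Finset.mem_image_of_mem _ (Finset.mem_range.2 (by omega)))

lemma Mv_spec : ∃ m, Dd B v p T m = Mv B v p T ∧ m ≤ B*B := by
  have := Finset.max'_mem _ (((Finset.nonempty_range_iff (n := B*B+1)).mpr
    (Nat.succ_ne_zero _)).image (Dd B v p T))
  rw [Finset.mem_image] at this
  obtain ⟨m, hm, he⟩ := this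
  exact ⟨m, he, by simpa using Nat.lt_succ_iff.mp (Finset.mem_range.mp hm)⟩

lemma mstar_spec : Dd B v p T (mstar B v p T) = Mv B v p T ∧ mstar B v p T ≤ B*B :=
  Nat.sInf_mem (Mv_spec (B := B) (v := v) (p := p) (T := T))

lemma Dd_lt_mstar {m : ℕ} (hm : m < mstar B v p T) :
    Dd B v p T m ≤ Mv B v p T - 1 := by
  have h1 : Dd B v p T m ≤ Mv B v p T := Dd_le_Mv (le_trans (le_of_lt hm) mstar_spec.2)
  rcases lt_or_eq_of_le h1 with h | h
  · omega
  · have hmem : m ∈ {m | Dd B v p T m = Mv B v p T ∧ m ≤ B*B} :=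
      ⟨h, le_trans (le_of_lt hm) mstar_spec.2⟩
    have h2 : mstar B v p T ≤ m := Nat.sInf_le hmem
    omega

variable (hDN : 1 ≤ Dd B v p T (B*B))
include hDN

lemma Mv_pos : 1 ≤ Mv B v p T := le_trans hDN (Dd_le_Mv (le_refl _))

lemma mstar_pos : 0 < mstar B v p T := by
  rcases Nat.eq_zero_or_pos (mstar B v p T) with h | h
  · have := mstar_spec (B := B) (v := v) (p := p) (T := T)
    rw [h] at this
    have h0 : Dd B v p T 0 = 0 := Finset.sum_range_zero _
    have := Mv_pos hDN
    omega
  · exact h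

lemma kstar_mstar : kstar B v p T + 1 = mstar B v p T := by
  have := mstar_pos hDN; unfold kstar; omega

lemma kstar_lt_mstar : kstar B v p T < mstar B v p T := by
  have := kstar_mstar hDN; omega

lemma kstar_lt : kstar B v p T < B*B :=
  lt_of_lt_of_le (kstar_lt_mstar hDN) mstar_spec.2

lemma wt_kstar : wt B v p T (kstar B v p T) = 1 := by
  have h1 : Dd B v p T (kstar B v p T + 1)
      = Dd B v p T (kstar B v p T) + wt B v p T (kstar B v p T) := Dd_succ _ _ _ _ _
  rw [kstar_mstar hDN, mstar_spec.1] at h1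
  have h2 := Dd_lt_mstar (kstar_lt_mstar hDN)
  rcases wt_bounds B v p T (kstar B v p T) with h | h | h <;> omega

lemma kstar_diag : cC B (kstar B v p T) < p (cR B (kstar B v p T)) := by
  have h := wt_kstar hDN
  unfold wt at h
  split_ifs at h
  next hc _ => exact hc.2
  next hc _ _ => exact hc.2
  all_goals omega

lemma kstar_val : T (cR B (kstar B v p T)) (cC B (kstar B v p T)) = v := by
  have h := wt_kstar hDN
  unfold wt at h
  split_ifs at h with h1 h2
  · exact h2
  all_goals omega

lemma B_pos : 0 < B := by
  rcases Nat.eq_zero_or_pos B with h | h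
  · have := kstar_lt hDN; rw [h] at this; simp at this
  · exact h

lemma right_ne (hT : IsSSYT p T) (hB1 : ∀ r, p r ≤ B)
    (hc1 : cC B (kstar B v p T) + 1 < p (cR B (kstar B v p T))) :
    T (cR B (kstar B v p T)) (cC B (kstar B v p T) + 1) ≠ v := by
  intro hcon
  set k0 := kstar B v p T with hk0
  set r := cR B k0 with hr
  set c := cC B k0 with hc
  have hrB : r < B := cR_lt (B_pos hDN)
  have hcB : c + 1 < B := lt_of_lt_of_le hc1 (hB1 r)
  have hkenc : enc B r c = k0 := enc_cRC (kstar_lt hDN)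
  have henc : enc B r (c+1) = k0 + 1 := by
    unfold enc at hkenc ⊢; omega
  have hklt : k0 + 1 < B * B := henc ▸ enc_lt hrB hcB
  have hwt : wt B v p T (k0 + 1) = 1 := by
    unfold wt
    rw [← henc, cR_enc hrB hcB, cC_enc hcB, if_pos ⟨henc ▸ hklt, hc1⟩, if_pos hcon]
  have hD2 : Dd B v p T (k0 + 2) = Mv B v p T + 1 := by
    have e1 : Dd B v p T (k0 + 2) = Dd B v p T (k0 + 1) + wt B v p T (k0 + 1) :=
      Dd_succ B v p T (k0 + 1)
    have e2 : Dd B v p T (k0 + 1) = Mv B v p T := by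
      rw [hk0, kstar_mstar hDN]; exact mstar_spec.1
    omega
  have hle : Dd B v p T (k0 + 2) ≤ Mv B v p T := Dd_le_Mv (by omega)
  omega

lemma below_ne (hT : IsSSYT p T) (hB1 : ∀ r, p r ≤ B) (hB2 : ∀ r, B ≤ r → p r = 0)
    (hcp : cC B (kstar B v p T) < p (cR B (kstar B v p T) + 1)) :
    T (cR B (kstar B v p T) + 1) (cC B (kstar B v p T)) ≠ v + 1 := by
  intro hcon
  set k0 := kstar B v p T with hk0
  set r := cR B k0 with hrdef
  set c := cC B k0 with hcdef
  have hrB : r < B := cR_lt (B_pos hDN)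
  have hcB : c < B := cC_lt (B_pos hDN)
  have hkenc : enc B r c = k0 := enc_cRC (kstar_lt hDN)
  -- the first column of row r+1 with entry > v
  have hcmem : c ∈ {x | v < T (r + 1) x} := by
    simp only [Set.mem_setOf_eq, hcon]; omega
  set d := sInf {x | v < T (r + 1) x} with hddef
  have hdc : d ≤ c := Nat.sInf_le hcmem
  have hdv : v < T (r+1) d := Nat.sInf_mem (⟨c, hcmem⟩ : {x | v < T (r + 1) x}.Nonempty)
  have hdmin : ∀ x, v < T (r+1) x → d ≤ x := fun x hx => Nat.sInf_le hx
  have hddiag : d < p (r+1) := by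
    by_contra hx
    rw [hT.2.2 (r+1) d (le_of_not_gt hx)] at hdv; omega
  have hr1B : r + 1 < B := by
    by_contra hx
    rw [hB2 (r+1) (le_of_not_gt hx)] at hddiag; omega
  set a := (B - 1 - (r+1)) * B with ha
  have henc1 : ∀ x, enc B (r+1) x = a + x := fun x => rfl
  have henc0 : ∀ x, enc B r x = a + B + x := by
    intro x; unfold enc
    have hrow : (B - 1 - r) = (B - 1 - (r+1)) + 1 := by omega
    rw [hrow, ha]; ring
  have hk0eq : k0 = a + B + c := by rw [← hkenc, henc0]
  have hms : mstar B v p T = a + B + c + 1 := by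
    have := kstar_mstar hDN; omega
  have hmsN : mstar B v p T ≤ B * B := mstar_spec.2
  -- lower bound on the interval sum
  have hjlt : a + d < mstar B v p T := by omega
  have hDj : Dd B v p T (a + d) ≤ Mv B v p T - 1 := Dd_lt_mstar hjlt
  have hsum : (1:ℤ) ≤ ∑ k ∈ Finset.Ico (a + d) (mstar B v p T), wt B v p T k := by
    rw [Finset.sum_Ico_eq_sub _ (le_of_lt hjlt)]
    have h1 := mstar_spec (B := B) (v := v) (p := p) (T := T) |>.1
    have h2 : Dd B v p T (mstar B v p T) - Dd B v p T (a + d)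
        = ∑ i ∈ Finset.range (mstar B v p T), wt B v p T i
          - ∑ i ∈ Finset.range (a + d), wt B v p T i := rfl
    omega
  -- the two pieces
  set S1 := (Finset.Ico d B).filter (fun x => x < p (r+1) ∧ T (r+1) x = v+1) with hS1
  set S2 := (Finset.range (c+1)).filter (fun x => T r x = v) with hS2
  have hb1 : ∑ k ∈ Finset.Ico (a + d) (a + B), wt B v p T k ≤ -(S1.card : ℤ) := by
    have hre : -(S1.card : ℤ)
        = ∑ x ∈ Finset.Ico d B, (if x < p (r+1) ∧ T (r+1) x = v+1 then (-1:ℤ) else 0) := by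
      rw [hS1, ← Finset.sum_boole]
      rw [← Finset.sum_neg_distrib]
      apply Finset.sum_congr rfl
      intro x _; split_ifs <;> simp
    rw [hre, Finset.sum_Ico_eq_sum_range, Finset.sum_Ico_eq_sum_range]
    have hlen : a + B - (a + d) = B - d := by omega
    rw [hlen]
    apply Finset.sum_le_sum
    intro i hi
    rw [Finset.mem_range] at hi
    have hxB : d + i < B := by omega
    have hax : a + d + i = enc B (r+1) (d+i) := by rw [henc1]; ring
    rw [hax]
    unfold wt
    rw [cR_enc hr1B hxB, cC_enc hxB]
    by_cases hxp : d + i < p (r+1)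
    · have hge : v + 1 ≤ T (r+1) (d+i) := by
        have := hT.1 (r+1) d (d+i) (by omega) hxp
        omega
      rw [if_pos ⟨enc_lt hr1B hxB, hxp⟩, if_neg (by omega)]
      by_cases hv1 : T (r+1) (d+i) = v + 1
      · rw [if_pos hv1, if_pos ⟨hxp, hv1⟩]
      · rw [if_neg hv1, if_neg (by tauto)]
    · rw [if_neg (by tauto), if_neg (by tauto)]
  have hb2 : ∑ k ∈ Finset.Ico (a + B) (mstar B v p T), wt B v p T k ≤ (S2.card : ℤ) := by
    have hre : (S2.card : ℤ)
        = ∑ x ∈ Finset.range (c+1), (if T r x = v then (1:ℤ) else 0) := by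
      rw [hS2, ← Finset.sum_boole]
    rw [hre, Finset.sum_Ico_eq_sum_range]
    have hlen : mstar B v p T - (a + B) = c + 1 := by omega
    rw [hlen]
    apply Finset.sum_le_sum
    intro i hi
    rw [Finset.mem_range] at hi
    have hxB : i < B := by omega
    have hax : a + B + i = enc B r i := (henc0 i).symm
    rw [hax]
    unfold wt
    rw [cR_enc hrB hxB, cC_enc hxB]
    by_cases hv : T r i = v
    · rw [if_pos hv]
      split_ifs <;> omega
    · rw [if_neg hv]
      split_ifs <;> omega
  have hcard : S2.card ≤ S1.card := by
    apply Finset.card_le_card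
    intro x hx
    rw [hS2, Finset.mem_filter, Finset.mem_range] at hx
    obtain ⟨hxc, hxv⟩ := hx
    have hx1 : x < p (r+1) := by omega
    have hlow : v < T (r+1) x := by
      have := hT.2.1 r (r+1) x (by omega) hx1
      omega
    have hup : T (r+1) x ≤ v + 1 := by
      have := hT.1 (r+1) x c (by omega) hcp
      omega
    rw [hS1, Finset.mem_filter, Finset.mem_Ico]
    exact ⟨⟨hdmin x hlow, by omega⟩, hx1, by omega⟩
  have hcons : ∑ k ∈ Finset.Ico (a + d) (a + B), wt B v p T k
      + ∑ k ∈ Finset.Ico (a + B) (mstar B v p T), wt B v p T k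
      = ∑ k ∈ Finset.Ico (a + d) (mstar B v p T), wt B v p T k :=
    Finset.sum_Ico_consecutive _ (by omega) (by omega)
  have : (S2.card : ℤ) ≤ (S1.card : ℤ) := by exact_mod_cast hcard
  omega

omit hDN in
lemma fop_val_star :
    fop B v p T (cR B (kstar B v p T)) (cC B (kstar B v p T)) = v + 1 := by
  simp [fop]

omit hDN in
lemma fop_val_of_ne {r c : ℕ}
    (h : ¬ (r = cR B (kstar B v p T) ∧ c = cC B (kstar B v p T))) :
    fop B v p T r c = T r c := by
  simp only [fop, if_neg h]

omit hDN in
lemma fop_val_key {k : ℕ} (hk : k < B * B) (hkk : k ≠ kstar B v p T)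
    (hk0 : kstar B v p T < B * B) :
    fop B v p T (cR B k) (cC B k) = T (cR B k) (cC B k) := by
  apply fop_val_of_ne
  rintro ⟨h1, h2⟩
  exact hkk (enc_inj hk hk0 h1 h2)

lemma fop_ssyt (hT : IsSSYT p T) (hp : Antitone p) (hB1 : ∀ r, p r ≤ B)
    (hB2 : ∀ r, B ≤ r → p r = 0) : IsSSYT p (fop B v p T) := by
  have hdiag : cC B (kstar B v p T) < p (cR B (kstar B v p T)) := kstar_diag hDN
  have hval : T (cR B (kstar B v p T)) (cC B (kstar B v p T)) = v := kstar_val hDN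
  have hstar : fop B v p T (cR B (kstar B v p T)) (cC B (kstar B v p T)) = v + 1 :=
    fop_val_star
  have hne' : ∀ r c, ¬ (r = cR B (kstar B v p T) ∧ c = cC B (kstar B v p T)) →
      fop B v p T r c = T r c := fun r c h => fop_val_of_ne h
  have hR := right_ne hDN hT hB1
  have hBel := below_ne hDN hT hB1 hB2
  generalize hrs : cR B (kstar B v p T) = rs at hdiag hval hstar hne' hR hBel
  generalize hcs : cC B (kstar B v p T) = cs at hdiag hval hstar hne' hR hBel
  have key1 : ∀ c₂, cs < c₂ → c₂ < p rs → v + 1 ≤ T rs c₂ := by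
    intro c₂ h1 h2
    have hcs1 : cs + 1 < p rs := by omega
    have hne := hR hcs1
    have ha : T rs cs ≤ T rs (cs+1) := hT.1 rs cs (cs+1) (by omega) hcs1
    have hb : T rs (cs+1) ≤ T rs c₂ := hT.1 rs (cs+1) c₂ (by omega) h2
    omega
  have key2 : ∀ r₂, rs < r₂ → cs < p r₂ → v + 2 ≤ T r₂ cs := by
    intro r₂ h1 h2
    have hcp : cs < p (rs+1) := lt_of_lt_of_le h2 (hp (by omega : rs + 1 ≤ r₂))
    have hne := hBel hcp
    have hgt : T rs cs < T (rs+1) cs := hT.2.1 rs (rs+1) cs (by omega) hcp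
    have h4 : v + 2 ≤ T (rs+1) cs := by omega
    rcases eq_or_lt_of_le (by omega : rs + 1 ≤ r₂) with h | h
    · rw [← h]; exact h4
    · have := hT.2.1 (rs+1) r₂ cs h h2
      omega
  refine ⟨?_, ?_, ?_⟩
  · intro rr c₁ c₂ hcc hc2
    by_cases h1 : rr = rs ∧ c₁ = cs
    · rw [h1.1, h1.2, hstar]
      rw [h1.1] at hc2
      rw [h1.2] at hcc
      by_cases h2 : c₂ = cs
      · rw [h2, hstar]
      · rw [hne' rs c₂ (fun hh => h2 hh.2)]
        exact key1 c₂ (by omega) hc2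
    · rw [hne' rr c₁ h1]
      by_cases h2 : rr = rs ∧ c₂ = cs
      · have h3 : T rr c₁ ≤ T rr c₂ := hT.1 rr c₁ c₂ hcc hc2
        rw [h2.1, h2.2, hstar]
        rw [h2.1, h2.2] at h3
        omega
      · rw [hne' rr c₂ h2]
        exact hT.1 rr c₁ c₂ hcc hc2
  · intro r₁ r₂ cc h12 hc
    by_cases h1 : r₁ = rs ∧ cc = cs
    · rw [h1.1, h1.2, hstar]
      rw [h1.1] at h12
      rw [h1.2] at hc
      rw [hne' r₂ cs (fun hh => by omega)]
      have := key2 r₂ h12 hc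
      omega
    · rw [hne' r₁ cc h1]
      by_cases h2 : r₂ = rs ∧ cc = cs
      · have h3 := hT.2.1 r₁ r₂ cc h12 hc
        rw [h2.1, h2.2, hstar]
        rw [h2.1, h2.2] at h3
        omega
      · rw [hne' r₂ cc h2]
        exact hT.2.1 r₁ r₂ cc h12 hc
  · intro rr cc hle
    have h1 : ¬ (rr = rs ∧ cc = cs) := by
      rintro ⟨h2, h3⟩; rw [h2, h3] at hle; omega
    rw [hne' rr cc h1]
    exact hT.2.2 rr cc hle

lemma fop_keyset_v :
    keyset B p (fop B v p T) v = (keyset B p T v).erase (kstar B v p T) := by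
  ext k
  simp only [keyset, Finset.mem_erase, Finset.mem_filter, Finset.mem_range]
  by_cases hk : k = kstar B v p T
  · subst hk
    rw [fop_val_star]
    constructor
    · rintro ⟨_, _, h⟩; omega
    · rintro ⟨h, _⟩; exact absurd rfl h
  · constructor
    · rintro ⟨h1, h2, h3⟩
      rw [fop_val_key h1 hk (kstar_lt hDN)] at h3
      exact ⟨hk, h1, h2, h3⟩
    · rintro ⟨_, h1, h2, h3⟩
      exact ⟨h1, h2, by rw [fop_val_key h1 hk (kstar_lt hDN)]; exact h3⟩

lemma fop_keyset_v1 :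
    keyset B p (fop B v p T) (v+1)
      = insert (kstar B v p T) (keyset B p T (v+1)) := by
  ext k
  simp only [keyset, Finset.mem_insert, Finset.mem_filter, Finset.mem_range]
  by_cases hk : k = kstar B v p T
  · subst hk
    rw [fop_val_star]
    exact ⟨fun _ => Or.inl rfl, fun _ => ⟨kstar_lt hDN, kstar_diag hDN, rfl⟩⟩
  · constructor
    · rintro ⟨h1, h2, h3⟩
      rw [fop_val_key h1 hk (kstar_lt hDN)] at h3
      exact Or.inr ⟨h1, h2, h3⟩
    · rintro (h | ⟨h1, h2, h3⟩)
      · exact absurd h hk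
      · exact ⟨h1, h2, by rw [fop_val_key h1 hk (kstar_lt hDN)]; exact h3⟩

lemma fop_keyset_other {i : ℕ} (hiv : i ≠ v) (hiv1 : i ≠ v + 1) :
    keyset B p (fop B v p T) i = keyset B p T i := by
  ext k
  simp only [keyset, Finset.mem_filter, Finset.mem_range]
  by_cases hk : k = kstar B v p T
  · subst hk
    rw [fop_val_star]
    have hv := kstar_val hDN
    constructor
    · rintro ⟨_, _, h⟩; omega
    · rintro ⟨_, _, h⟩; omega
  · constructor
    · rintro ⟨h1, h2, h3⟩
      rw [fop_val_key h1 hk (kstar_lt hDN)] at h3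
      exact ⟨h1, h2, h3⟩
    · rintro ⟨h1, h2, h3⟩
      exact ⟨h1, h2, by rw [fop_val_key h1 hk (kstar_lt hDN)]; exact h3⟩

lemma delta_wt (k : ℕ) :
    wt B v p (fop B v p T) k = wt B v p T k + (if k = kstar B v p T then -2 else 0) := by
  by_cases hk : k = kstar B v p T
  · subst hk
    rw [if_pos rfl, wt_kstar hDN]
    have h1 : wt B v p (fop B v p T) (kstar B v p T) = -1 := by
      unfold wt
      rw [if_pos ⟨kstar_lt hDN, kstar_diag hDN⟩, fop_val_star,
        if_neg (by omega), if_pos rfl]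
    omega
  · rw [if_neg hk, add_zero]
    by_cases hkN : k < B * B
    · unfold wt
      rw [fop_val_key hkN hk (kstar_lt hDN)]
    · unfold wt
      rw [if_neg (by tauto), if_neg (by tauto)]

lemma Dd_fop (m : ℕ) :
    Dd B v p (fop B v p T) m
      = Dd B v p T m + (if kstar B v p T < m then -2 else 0) := by
  unfold Dd
  rw [Finset.sum_congr rfl (fun k _ => delta_wt hDN k), Finset.sum_add_distrib]
  congr 1
  rw [Finset.sum_ite_eq' (Finset.range m) (kstar B v p T) (fun _ => (-2:ℤ))]
  simp [Finset.mem_range]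

lemma eop_fop : eop B v p (fop B v p T) = T := by
  have hk0N := kstar_lt hDN
  have hDd1 : Dd B v p T (kstar B v p T + 1) = Mv B v p T := by
    rw [kstar_mstar hDN]; exact mstar_spec.1
  have helig : elig B v p (fop B v p T) (kstar B v p T) := by
    refine ⟨hk0N, ?_, ?_⟩
    · have h := delta_wt hDN (kstar B v p T)
      rw [if_pos rfl, wt_kstar hDN] at h
      omega
    · intro m h1 h2
      rw [Dd_fop hDN, Dd_fop hDN]
      have ha : Dd B v p T m ≤ Mv B v p T := Dd_le_Mv h2
      rw [if_pos h1, if_pos (by omega)]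
      omega
  have hnot : ∀ k, k < kstar B v p T → ¬ elig B v p (fop B v p T) k := by
    rintro k hk ⟨hkN, hwk, hall⟩
    have hwk' : wt B v p T k = -1 := by
      have h := delta_wt hDN k
      rw [if_neg (by omega)] at h
      omega
    have h1 := hall (kstar B v p T) hk (le_of_lt hk0N)
    rw [Dd_fop hDN, Dd_fop hDN] at h1
    rw [if_neg (by omega), if_neg (by omega)] at h1
    have h2 : Dd B v p T (kstar B v p T + 1)
        = Dd B v p T (kstar B v p T) + wt B v p T (kstar B v p T) :=
      Dd_succ B v p T _
    have hwtk := wt_kstar hDN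
    have h3 : Dd B v p T (k+1) ≤ Mv B v p T - 1 :=
      Dd_lt_mstar (by have := kstar_mstar hDN; omega)
    have h4 : Dd B v p T (k+1) = Dd B v p T k + wt B v p T k := Dd_succ B v p T _
    have h5 : Dd B v p T k ≤ Mv B v p T - 1 :=
      Dd_lt_mstar (by have := kstar_mstar hDN; omega)
    omega
  have hex : ∃ k, elig B v p (fop B v p T) k := ⟨_, helig⟩
  have hinf : sInf {k | elig B v p (fop B v p T) k} = kstar B v p T := by
    apply le_antisymm (Nat.sInf_le helig)
    by_contra hlt
    push_neg at hlt
    have hmem := Nat.sInf_mem (⟨_, helig⟩ : {k | elig B v p (fop B v p T) k}.Nonempty)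
    exact hnot _ hlt hmem
  funext r c
  unfold eop
  rw [dif_pos hex, hinf]
  by_cases h : r = cR B (kstar B v p T) ∧ c = cC B (kstar B v p T)
  · rw [if_pos h, h.1, h.2]
    exact (kstar_val hDN).symm
  · rw [if_neg h]
    exact fop_val_of_ne h

end Part4

section Core

variable {B v : ℕ} {p : ℕ → ℕ}

theorem core (hp : Antitone p) (hB1 : ∀ r, p r ≤ B) (hB2 : ∀ r, B ≤ r → p r = 0)
    (α β : ℕ → ℕ) (hv : α (v+1) < α v) (hβv : β v + 1 = α v)
    (hβv1 : β (v+1) = α (v+1) + 1)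
    (hβo : ∀ i, i ≠ v → i ≠ v+1 → β i = α i)
    (V : ℕ) (hV : ∀ i, V ≤ i → β i = 0) :
    Kostka p α ≤ Kostka p β := by
  classical
  have hBfin := target_finite p B hB1 hB2 β V hV
  have hmem : ∀ T, (IsSSYT p T ∧ ∀ i, contentOf p T i = α i) →
      1 ≤ Dd B v p T (B*B) := by
    rintro T ⟨hT, hcont⟩
    have h1 : (keyset B p T v).card = α v := by
      rw [← contentOf_eq (B := B) p T hB1 hB2 v]; exact hcont v
    have h2 : (keyset B p T (v+1)).card = α (v+1) := by
      rw [← contentOf_eq (B := B) p T hB1 hB2 (v+1)]; exact hcont (v+1)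
    rw [Dd_total, h1, h2]
    omega
  have hmaps : ∀ T, (IsSSYT p T ∧ ∀ i, contentOf p T i = α i) →
      (IsSSYT p (fop B v p T) ∧ ∀ i, contentOf p (fop B v p T) i = β i) := by
    rintro T hTm
    obtain ⟨hT, hcont⟩ := hTm
    have hDN := hmem T ⟨hT, hcont⟩
    have h1 : (keyset B p T v).card = α v := by
      rw [← contentOf_eq (B := B) p T hB1 hB2 v]; exact hcont v
    have h2 : (keyset B p T (v+1)).card = α (v+1) := by
      rw [← contentOf_eq (B := B) p T hB1 hB2 (v+1)]; exact hcont (v+1)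
    refine ⟨fop_ssyt hDN hT hp hB1 hB2, ?_⟩
    intro i
    rw [contentOf_eq (B := B) p (fop B v p T) hB1 hB2 i]
    by_cases hiv : i = v
    · subst hiv
      rw [fop_keyset_v hDN, Finset.card_erase_of_mem ?_]
      · omega
      · simp only [keyset, Finset.mem_filter, Finset.mem_range]
        exact ⟨kstar_lt hDN, kstar_diag hDN, kstar_val hDN⟩
    · by_cases hiv1 : i = v + 1
      · subst hiv1
        rw [fop_keyset_v1 hDN, Finset.card_insert_of_notMem ?_]
        · omega
        · simp only [keyset, Finset.mem_filter, Finset.mem_range]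
          rintro ⟨_, _, hval⟩
          have := kstar_val hDN
          omega
      · rw [fop_keyset_other hDN hiv hiv1,
          ← contentOf_eq (B := B) p T hB1 hB2 i, hcont i, hβo i hiv hiv1]
  have hinj : Set.InjOn (fun T => fop B v p T)
      {T | IsSSYT p T ∧ ∀ i, contentOf p T i = α i} := by
    intro T1 h1 T2 h2 he
    have e1 : eop B v p (fop B v p T1) = T1 := eop_fop (hmem T1 h1)
    have e2 : eop B v p (fop B v p T2) = T2 := eop_fop (hmem T2 h2)
    simp only at he
    rw [← e1, ← e2, he]
  calc Kostka p α
      = {T | IsSSYT p T ∧ ∀ i, contentOf p T i = α i}.ncard := rfl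
    _ = ((fun T => fop B v p T) ''
        {T | IsSSYT p T ∧ ∀ i, contentOf p T i = α i}).ncard :=
      (Set.ncard_image_of_injOn hinj).symm
    _ ≤ {T | IsSSYT p T ∧ ∀ i, contentOf p T i = β i}.ncard := by
      apply Set.ncard_le_ncard ?_ hBfin
      rintro T' ⟨T, hT, rfl⟩
      exact hmaps T hT
    _ = Kostka p β := rfl

end Core

section Chain

/-- one adjacent transfer: move one unit of content from `v` to `v+1`,
    staying supported below `V`. -/
def StepR (V : ℕ) (α β : ℕ → ℕ) : Prop :=
  (∃ v, α (v+1) < α v ∧ β v + 1 = α v ∧ β (v+1) = α (v+1) + 1 ∧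
    ∀ i, i ≠ v → i ≠ v+1 → β i = α i) ∧ (∀ i, V ≤ i → β i = 0)

/-- `ρ` with one box moved from row `j` to row `u`. -/
def mid (ρ : ℕ → ℕ) (j u : ℕ) : ℕ → ℕ :=
  fun i => if i = j then ρ j - 1 else if i = u then ρ i + 1 else ρ i

lemma move_aux {ρ : ℕ → ℕ} (hρ : Antitone ρ) {V j k : ℕ} (hjk : j < k)
    (hkV : k < V) (hvan : ∀ i, V ≤ i → ρ i = 0) :
    ∀ n u, j < u → u ≤ k → k - u = n →
      Relation.ReflTransGen (StepR V) (mid ρ j u) (mid ρ j k) := by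
  intro n
  induction n with
  | zero =>
    intro u h1 h2 h3
    have : u = k := by omega
    rw [this]
  | succ n IH =>
    intro u h1 h2 h3
    have huk : u < k := by omega
    have hmono := hρ (by omega : u ≤ u + 1)
    have hstep : StepR V (mid ρ j u) (mid ρ j (u+1)) := by
      refine ⟨⟨u, ?_, ?_, ?_, ?_⟩, ?_⟩
      · simp only [mid]; split_ifs <;> omega
      · simp only [mid]; split_ifs <;> omega
      · simp only [mid]; split_ifs <;> omega
      · intro i hi1 hi2
        simp only [mid]; split_ifs <;> omega
      · intro i hi
        have := hvan i hi
        simp only [mid]; split_ifs <;> omega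
    exact Relation.ReflTransGen.head hstep (IH (u+1) (by omega) (by omega) (by omega))

lemma move {ρ : ℕ → ℕ} (hρ : Antitone ρ) (V j k : ℕ) (hjk : j < k)
    (h2 : ρ k + 2 ≤ ρ j) (hadj : j + 1 < k → ρ (j+1) < ρ j)
    (hvan : ∀ i, V ≤ i → ρ i = 0) (hkV : k < V) :
    Relation.ReflTransGen (StepR V) ρ (mid ρ j k) := by
  have hj1 : ρ (j+1) < ρ j := by
    rcases eq_or_lt_of_le (by omega : j + 1 ≤ k) with h | h
    · have := hρ (le_of_eq h.symm)
      omega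
    · exact hadj h
  have hfirst : StepR V ρ (mid ρ j (j+1)) := by
    refine ⟨⟨j, ?_, ?_, ?_, ?_⟩, ?_⟩
    · exact hj1
    · simp only [mid]; split_ifs <;> omega
    · simp only [mid]; split_ifs <;> omega
    · intro i hi1 hi2
      simp only [mid]; split_ifs <;> omega
    · intro i hi
      have := hvan i hi
      simp only [mid]; split_ifs <;> omega
  exact Relation.ReflTransGen.head hfirst
    (move_aux hρ hjk hkV hvan (k - (j+1)) (j+1) (by omega) (by omega) rfl)

lemma chain {V : ℕ} {ν : ℕ → ℕ} (hν : Antitone ν) (hνvan : ∀ i, V ≤ i → ν i = 0) :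
    ∀ d ρ, Antitone ρ → (∀ i, V ≤ i → ρ i = 0) → Dominates ρ ν →
      (∑ i ∈ Finset.range V, ρ i = ∑ i ∈ Finset.range V, ν i) →
      (∑ r ∈ Finset.range (V+1),
        (∑ i ∈ Finset.range r, ρ i - ∑ i ∈ Finset.range r, ν i) = d) →
      Relation.ReflTransGen (StepR V) ρ ν := by
  intro d
  induction d using Nat.strong_induction_on with
  | _ d IH =>
  intro ρ hρ hvan hdom hsum hd
  by_cases heq : ∀ t, ρ t = ν t
  · exact funext heq ▸ Relation.ReflTransGen.refl
  push_neg at heq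
  have hjne : {t | ρ t ≠ ν t}.Nonempty := heq
  obtain ⟨j, hjdef⟩ : ∃ x, x = sInf {t | ρ t ≠ ν t} := ⟨_, rfl⟩
  have hjmem : ρ j ≠ ν j := by rw [hjdef]; exact Nat.sInf_mem hjne
  have hjmin : ∀ t, t < j → ρ t = ν t := by
    intro t ht
    by_contra hcon
    have h2 : sInf {t | ρ t ≠ ν t} ≤ t := Nat.sInf_le hcon
    omega
  have hSj : ∑ i ∈ Finset.range j, ρ i = ∑ i ∈ Finset.range j, ν i :=
    Finset.sum_congr rfl (fun i hi => hjmin i (Finset.mem_range.mp hi))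
  have hρj : ν j < ρ j := by
    have hD := hdom (j+1)
    rw [Finset.sum_range_succ, Finset.sum_range_succ] at hD
    omega
  have hjV : j < V := by
    by_contra hcon
    have h1 := hvan j (le_of_not_gt hcon)
    have h2 := hνvan j (le_of_not_gt hcon)
    omega
  have hkne : {t | ρ t < ν t}.Nonempty := by
    by_contra hcon
    have hall : ∀ t, ν t ≤ ρ t := fun t =>
      le_of_not_gt (fun h => hcon ⟨t, h⟩)
    have : ∑ i ∈ Finset.range V, ν i < ∑ i ∈ Finset.range V, ρ i :=
      Finset.sum_lt_sum (fun i _ => hall i) ⟨j, Finset.mem_range.mpr hjV, hρj⟩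
    omega
  obtain ⟨k, hkdef⟩ : ∃ x, x = sInf {t | ρ t < ν t} := ⟨_, rfl⟩
  have hkmem : ρ k < ν k := by rw [hkdef]; exact Nat.sInf_mem hkne
  have hkmin : ∀ t, t < k → ν t ≤ ρ t := by
    intro t ht
    by_contra hcon
    have h2 : sInf {t | ρ t < ν t} ≤ t := Nat.sInf_le (lt_of_not_ge hcon)
    omega
  have hjk : j < k := by
    rcases lt_trichotomy j k with h | h | h
    · exact h
    · exfalso; rw [h] at hρj; omega
    · have := hjmin k h; omega
  have hkV : k < V := by
    by_contra hcon
    have h1 := hvan k (le_of_not_gt hcon)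
    have h2 := hνvan k (le_of_not_gt hcon)
    omega
  have hFjne : ((Finset.range V).filter (fun t => j ≤ t ∧ ρ t = ρ j)).Nonempty :=
    ⟨j, Finset.mem_filter.mpr ⟨Finset.mem_range.mpr hjV, le_refl j, rfl⟩⟩
  obtain ⟨j', hj'def⟩ :
      ∃ x, x = ((Finset.range V).filter (fun t => j ≤ t ∧ ρ t = ρ j)).max' hFjne :=
    ⟨_, rfl⟩
  have hj'mem : j' ∈ (Finset.range V).filter (fun t => j ≤ t ∧ ρ t = ρ j) := by
    rw [hj'def]; exact Finset.max'_mem _ hFjne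
  rw [Finset.mem_filter, Finset.mem_range] at hj'mem
  obtain ⟨hj'V, hjj', hρj'⟩ := hj'mem
  have hj'max : ∀ t, t < V → j ≤ t → ρ t = ρ j → t ≤ j' := by
    intro t h1 h2 h3
    rw [hj'def]
    exact Finset.le_max' _ t (Finset.mem_filter.mpr ⟨Finset.mem_range.mpr h1, h2, h3⟩)
  obtain ⟨k2, hk2def⟩ : ∃ x, x = sInf {t | ρ t = ρ k} := ⟨_, rfl⟩
  have hk2mem : ρ k2 = ρ k := by
    rw [hk2def]
    exact Nat.sInf_mem (⟨k, rfl⟩ : {t | ρ t = ρ k}.Nonempty)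
  have hk2le : k2 ≤ k := by
    rw [hk2def]
    exact Nat.sInf_le rfl
  have hk2min : ∀ t, t < k2 → ρ t ≠ ρ k := by
    intro t ht hcon
    have h2 : sInf {t | ρ t = ρ k} ≤ t := Nat.sInf_le hcon
    omega
  have hνjk : ν k ≤ ν j := hν (le_of_lt hjk)
  have hgap : ρ k2 + 2 ≤ ρ j' := by omega
  have hj'k2 : j' < k2 := by
    by_contra hcon
    have := hρ (le_of_not_gt hcon)
    omega
  have hadj : j' + 1 < k2 → ρ (j'+1) < ρ j' := by
    intro h
    have h1 : ρ (j'+1) ≤ ρ j' := hρ (by omega)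
    rcases eq_or_lt_of_le h1 with h3 | h3
    · exfalso
      have h4 : j' + 1 ≤ j' := hj'max (j'+1) (by omega) (by omega) (by omega)
      omega
    · exact h3
  have hmove : Relation.ReflTransGen (StepR V) ρ (mid ρ j' k2) :=
    move hρ V j' k2 hj'k2 hgap hadj hvan (by omega)
  have hval : ∀ i, i ≠ j' → i ≠ k2 → mid ρ j' k2 i = ρ i := by
    intro i h1 h2
    simp only [mid]
    rw [if_neg h1, if_neg h2]
  have hvalj' : mid ρ j' k2 j' = ρ j' - 1 := by
    simp only [mid]
    split_ifs <;> omega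
  have hvalk2 : mid ρ j' k2 k2 = ρ k2 + 1 := by
    simp only [mid]
    split_ifs <;> omega
  have hρ'anti : Antitone (mid ρ j' k2) := by
    apply antitone_nat_of_succ_le
    intro i
    by_cases hij' : i = j'
    · rw [hij', hvalj']
      by_cases hj2 : j' + 1 = k2
      · rw [hj2, hvalk2]
        omega
      · rw [hval (j'+1) (by omega) hj2]
        have := hadj (by omega)
        omega
    · by_cases hik2' : i + 1 = k2
      · rw [hik2', hvalk2, hval i hij' (by omega)]
        have h5 : ρ i ≠ ρ k := hk2min i (by omega)
        have h6 : ρ k2 ≤ ρ i := hρ (by omega : i ≤ k2)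
        omega
      · by_cases hii : i = k2
        · rw [hii, hvalk2, hval (k2+1) (by omega) (by omega)]
          have := hρ (by omega : k2 ≤ k2 + 1)
          omega
        · by_cases hi1j' : i + 1 = j'
          · rw [hi1j', hvalj', hval i hij' hii]
            have := hρ (by omega : i ≤ j')
            omega
          · rw [hval (i+1) hi1j' hik2', hval i hij' hii]
            exact hρ (by omega)
  have hρ'van : ∀ i, V ≤ i → mid ρ j' k2 i = 0 := by
    intro i hi
    rw [hval i (by omega) (by omega)]
    exact hvan i hi
  have key : ∀ r, (∑ i ∈ Finset.range r, (mid ρ j' k2 i : ℤ))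
      = (∑ i ∈ Finset.range r, (ρ i : ℤ))
        + (if j' < r then -1 else 0) + (if k2 < r then 1 else 0) := by
    intro r
    induction r with
    | zero => simp
    | succ r ih =>
      rw [Finset.sum_range_succ, Finset.sum_range_succ, ih]
      by_cases h1 : r = j'
      · rw [h1, hvalj']
        split_ifs <;> omega
      · by_cases h2 : r = k2
        · rw [h2, hvalk2]
          split_ifs <;> omega
        · rw [hval r h1 h2]
          split_ifs <;> omega
  have hstrict : ∀ r, j' < r → r ≤ k2 →
      ∑ i ∈ Finset.range r, ν i < ∑ i ∈ Finset.range r, ρ i := by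
    intro r h1 h2
    apply Finset.sum_lt_sum
    · intro i hi
      rw [Finset.mem_range] at hi
      exact hkmin i (by omega)
    · exact ⟨j, Finset.mem_range.mpr (by omega), hρj⟩
  have hdom' : Dominates (mid ρ j' k2) ν := by
    intro r
    have hD := hdom r
    have hDZ : (∑ i ∈ Finset.range r, (ν i : ℤ)) ≤ ∑ i ∈ Finset.range r, (ρ i : ℤ) := by
      exact_mod_cast hD
    have hgoalZ : (∑ i ∈ Finset.range r, (ν i : ℤ))
        ≤ ∑ i ∈ Finset.range r, (mid ρ j' k2 i : ℤ) := by
      rw [key r]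
      split_ifs with ha hb
      · omega
      · have hs := hstrict r ha (by omega)
        have hsZ : (∑ i ∈ Finset.range r, (ν i : ℤ))
            < ∑ i ∈ Finset.range r, (ρ i : ℤ) := by exact_mod_cast hs
        omega
      · omega
      · omega
    exact_mod_cast hgoalZ
  have hsum' : ∑ i ∈ Finset.range V, mid ρ j' k2 i = ∑ i ∈ Finset.range V, ν i := by
    have h1 : (∑ i ∈ Finset.range V, (mid ρ j' k2 i : ℤ))
        = ∑ i ∈ Finset.range V, (ν i : ℤ) := by
      rw [key V, if_pos (by omega), if_pos (by omega)]
      have h2 : (∑ i ∈ Finset.range V, (ρ i : ℤ)) = ∑ i ∈ Finset.range V, (ν i : ℤ) := by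
        exact_mod_cast hsum
      omega
    exact_mod_cast h1
  have hterm_le : ∀ r, ∑ i ∈ Finset.range r, mid ρ j' k2 i ≤ ∑ i ∈ Finset.range r, ρ i := by
    intro r
    have h1 : (∑ i ∈ Finset.range r, (mid ρ j' k2 i : ℤ))
        ≤ ∑ i ∈ Finset.range r, (ρ i : ℤ) := by
      rw [key r]
      split_ifs <;> omega
    exact_mod_cast h1
  have hd'lt : (∑ r ∈ Finset.range (V+1),
      (∑ i ∈ Finset.range r, mid ρ j' k2 i - ∑ i ∈ Finset.range r, ν i)) < d := by
    rw [← hd]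
    apply Finset.sum_lt_sum
    · intro r _
      have := hterm_le r
      omega
    · refine ⟨j'+1, Finset.mem_range.mpr (by omega), ?_⟩
      have h1 := hstrict (j'+1) (by omega) (by omega)
      have h2 : (∑ i ∈ Finset.range (j'+1), (mid ρ j' k2 i : ℤ))
          = (∑ i ∈ Finset.range (j'+1), (ρ i : ℤ)) - 1 := by
        rw [key (j'+1), if_pos (by omega), if_neg (by omega)]
        ring
      have h4 : ((∑ i ∈ Finset.range (j'+1), mid ρ j' k2 i : ℕ) : ℤ) + 1
          = ((∑ i ∈ Finset.range (j'+1), ρ i : ℕ) : ℤ) := by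
        push_cast
        omega
      omega
  exact Relation.ReflTransGen.trans hmove
    (IH _ hd'lt (mid ρ j' k2) hρ'anti hρ'van hdom' hsum' rfl)

lemma kostka_chain {B V : ℕ} {p : ℕ → ℕ} (hp : Antitone p) (hB1 : ∀ r, p r ≤ B)
    (hB2 : ∀ r, B ≤ r → p r = 0) {α β : ℕ → ℕ}
    (h : Relation.ReflTransGen (StepR V) α β) :
    Kostka p α ≤ Kostka p β := by
  induction h with
  | refl => exact le_refl _
  | tail hab hbc ih =>
    obtain ⟨⟨v, h1, h2, h3, h4⟩, h5⟩ := hbc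
    exact le_trans ih (core (B := B) (v := v) hp hB1 hB2 _ _ h1 h2 h3 h4 V h5)

lemma bound_of_finite_support {f : ℕ → ℕ} (h : (Function.support f).Finite) :
    ∃ V, ∀ i, V ≤ i → f i = 0 := by
  refine ⟨(h.toFinset.sup id) + 1, ?_⟩
  intro i hi
  by_contra hc
  have hmem : i ∈ h.toFinset := by
    rw [Set.Finite.mem_toFinset, Function.mem_support]
    exact hc
  have := Finset.le_sup (f := id) hmem
  simp only [id] at this
  omega

lemma sum_range_of_bound {n V : ℕ} {f : ℕ → ℕ} (h : IsComposition n f)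
    (hV : ∀ i, V ≤ i → f i = 0) :
    ∑ i ∈ Finset.range V, f i = n := by
  rw [← h.2]
  symm
  apply finsum_eq_sum_of_support_subset
  intro i hi
  rw [Function.mem_support] at hi
  rw [Finset.coe_range, Set.mem_Iio]
  by_contra hc
  exact hi (hV i (le_of_not_gt hc))

end Chain

end KostkaProof

theorem kostka_note_stmt8 {n : ℕ} (lam μ ν : ℕ → ℕ)
    (hlam : IsPartition n lam) (hμ : IsPartition n μ) (hν : IsPartition n ν)
    (h : Dominates μ ν) :
    Kostka lam μ ≤ Kostka lam ν := by
  obtain ⟨Vl, hVl⟩ := KostkaProof.bound_of_finite_support hlam.2.1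
  obtain ⟨Vμ, hVμ⟩ := KostkaProof.bound_of_finite_support hμ.2.1
  obtain ⟨Vν, hVν⟩ := KostkaProof.bound_of_finite_support hν.2.1
  set B := max (lam 0 + 1) Vl with hBdef
  have hB1 : ∀ r, lam r ≤ B := by
    intro r
    have := hlam.1 (Nat.zero_le r)
    have := le_max_left (lam 0 + 1) Vl
    omega
  have hB2 : ∀ r, B ≤ r → lam r = 0 := by
    intro r hr
    apply hVl
    have := le_max_right (lam 0 + 1) Vl
    omega
  set V := max Vμ Vν with hVdef
  have hμvan : ∀ i, V ≤ i → μ i = 0 := by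
    intro i hi
    apply hVμ
    have := le_max_left Vμ Vν
    omega
  have hνvan : ∀ i, V ≤ i → ν i = 0 := by
    intro i hi
    apply hVν
    have := le_max_right Vμ Vν
    omega
  have hsum : ∑ i ∈ Finset.range V, μ i = ∑ i ∈ Finset.range V, ν i := by
    rw [KostkaProof.sum_range_of_bound hμ.2 hμvan,
      KostkaProof.sum_range_of_bound hν.2 hνvan]
  have hchain := KostkaProof.chain hν.1 hνvan
    (∑ r ∈ Finset.range (V+1),
      (∑ i ∈ Finset.range r, μ i - ∑ i ∈ Finset.range r, ν i))
    μ hμ.1 hμvan h hsum rfl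
  exact KostkaProof.kostka_chain (B := B) hlam.1 hB1 hB2 hchain
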